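/- If v_r ≥ 2√(g h_r), then the discharge-form inverse Lax curve lies strictly above the upper critical curve: φ̃_r(h) > h·√(g h) for every h > 0 (in particular φ̃_r is strictly positive and never meets the critical curves C̃⁺ and C̃⁻). -/
import Mathlib


/-- Inverse Lax curve through the right state `(hr, vr)`. -/
noncomputable def phir (g hr vr h : ℝ) : ℝ :=
  if h ≤ hr then vr - 2 * Real.sqrt (g * hr) + 2 * Real.sqrt (g * h)
  else vr + (h - hr) * Real.sqrt (g * (h + hr) / (2 * h * hr))

/-- Discharge-form inverse Lax curve through the right state. -/
noncomputable def phirTilde (g hr vr h : ℝ) : ℝ := h * phir g hr vr h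

/-- If `v_r ≥ 2√(g h_r)`, the discharge-form inverse Lax curve lies strictly above
the upper critical curve `C̃⁺(h) = h√(g h)` for every `h > 0`. -/
theorem phirTilde_above_upper_critical (g hr vr : ℝ) (hg : 0 < g) (hhr : 0 < hr)
    (hvr : vr ≥ 2 * Real.sqrt (g * hr)) :
    ∀ h : ℝ, 0 < h → phirTilde g hr vr h > h * Real.sqrt (g * h) := by
  intro h h0
  have hA0 : 0 < Real.sqrt (g * h) := Real.sqrt_pos.mpr (mul_pos hg h0)
  have key : phir g hr vr h > Real.sqrt (g * h) := by
    unfold phir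
    split_ifs with hle
    · linarith
    · have hlt : hr < h := lt_of_not_ge hle
      set A := Real.sqrt (g * h) with hAdef
      set B := Real.sqrt (g * hr) with hBdef
      set C := Real.sqrt (g * (h + hr) / (2 * h * hr)) with hCdef
      set T := Real.sqrt (h * hr) with hTdef
      have hB0 : 0 ≤ B := Real.sqrt_nonneg _
      have hC0 : 0 ≤ C := Real.sqrt_nonneg _
      have hT0 : 0 ≤ T := Real.sqrt_nonneg _
      have hA2 : A ^ 2 = g * h := Real.sq_sqrt (by positivity)
      have hB2 : B ^ 2 = g * hr := Real.sq_sqrt (by positivity)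
      have hT2 : T ^ 2 = h * hr := Real.sq_sqrt (by positivity)
      have hC2 : C ^ 2 = g * (h + hr) / (2 * h * hr) := Real.sq_sqrt (by positivity)
      have hC2' : 2 * h * hr * C ^ 2 = g * (h + hr) := by
        rw [hC2]; field_simp
      have hAB : A * B = g * T := by
        rw [hAdef, hBdef, hTdef, ← Real.sqrt_mul (by positivity),
          show g * h * (g * hr) = g ^ 2 * (h * hr) by ring,
          Real.sqrt_mul (by positivity), Real.sqrt_sq hg.le]
      have hTle : 2 * T ≤ h + hr := by
        have hsplit : T = Real.sqrt h * Real.sqrt hr := Real.sqrt_mul h0.le hr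
        have h1 : Real.sqrt h ^ 2 = h := Real.sq_sqrt h0.le
        have h2 : Real.sqrt hr ^ 2 = hr := Real.sq_sqrt hhr.le
        nlinarith [sq_nonneg (Real.sqrt h - Real.sqrt hr)]
      have key2 : (2 * A - 2 * B) ^ 2 ≤ ((h - hr) * C) ^ 2 := by
        have e1 : ((h - hr) * C) ^ 2 * (2 * h * hr) = (h - hr) ^ 2 * (g * (h + hr)) := by
          calc ((h - hr) * C) ^ 2 * (2 * h * hr)
              = (h - hr) ^ 2 * (2 * h * hr * C ^ 2) := by ring
            _ = (h - hr) ^ 2 * (g * (h + hr)) := by rw [hC2']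
        have e2 : (2 * A - 2 * B) ^ 2 = 4 * g * (h + hr) - 8 * g * T := by
          have : (2 * A - 2 * B) ^ 2 = 4 * A ^ 2 - 8 * (A * B) + 4 * B ^ 2 := by ring
          rw [this, hA2, hB2, hAB]; ring
        nlinarith [mul_nonneg (mul_nonneg hg.le (sq_nonneg (h + hr - 2 * T)))
            (show (0:ℝ) ≤ h + hr + 4 * T by positivity),
          mul_pos h0 hhr, hT2, e1, e2]
      have hL : 0 ≤ (h - hr) * C := mul_nonneg (by linarith) hC0
      have hAgeB : B ≤ A := Real.sqrt_le_sqrt (by nlinarith)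
      have h3 : 2 * A - 2 * B ≤ (h - hr) * C :=
        le_of_pow_le_pow_left₀ two_ne_zero hL key2
      linarith
  have := mul_lt_mul_of_pos_left key h0
  unfold phirTilde
  linarith
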